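/- Let G be a finite group and M a G-lattice with flasque resolution 0 → M → P → F → 0 (P permutation, F flasque). Then H^1(G,F) ≅ Ш²(G,M). Consequently, if M is equivalent to a direct summand of a quasi-permutation G-lattice, then Ш²(H,M) = 0 for all subgroups H ≤ G. -/

import Mathlib

open Function

section Core
variable (G : Type) [Group G]

/-- A map is `G`-equivariant. -/
def IsEquivMapP {M N : Type} [AddCommGroup M] [AddCommGroup N]
    [DistribMulAction G M] [DistribMulAction G N] (f : M → N) : Prop :=
  ∀ (g : G) (m : M), f (g • m) = g • f m

/-- `M` is a permutation `G`-lattice: it has a finite `ℤ`-basis permuted by `G`. -/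
def IsPermLat (M : Type) [AddCommGroup M] [DistribMulAction G M] : Prop :=
  ∃ (ι : Type) (_ : Fintype ι) (b : Module.Basis ι ℤ M) (σ : G → ι → ι),
    ∀ (g : G) (i : ι), g • (b i : M) = b (σ g i)

/-- `M` is a lattice: finitely generated and free over `ℤ`. -/
def IsLat (M : Type) [AddCommGroup M] : Prop := Module.Free ℤ M ∧ Module.Finite ℤ M

/-- A short exact sequence `0 → M → E → P → 0` of `G`-modules. -/
def ShortExactG (M E P : Type) [AddCommGroup M] [AddCommGroup E] [AddCommGroup P]
    [DistribMulAction G M] [DistribMulAction G E] [DistribMulAction G P] : Prop :=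
  ∃ (i : M →+ E) (p : E →+ P), IsEquivMapP G i ∧ IsEquivMapP G p ∧
    Injective i ∧ Surjective p ∧ i.range = p.ker

/-- Colliot-Thélène–Sansuc equivalence of `G`-lattices. -/
def LatEquiv (M N : Type) [AddCommGroup M] [AddCommGroup N]
    [DistribMulAction G M] [DistribMulAction G N] : Prop :=
  ∃ (E : Type) (_ : AddCommGroup E) (_ : DistribMulAction G E)
    (P : Type) (_ : AddCommGroup P) (_ : DistribMulAction G P)
    (Q : Type) (_ : AddCommGroup Q) (_ : DistribMulAction G Q),
    IsLat E ∧ IsPermLat G P ∧ IsPermLat G Q ∧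
    ShortExactG G M E P ∧ ShortExactG G N E Q

/-- `M` is stably permutation. -/
def IsStablyPerm (M : Type) [AddCommGroup M] [DistribMulAction G M] : Prop :=
  ∃ (P : Type) (_ : AddCommGroup P) (_ : DistribMulAction G P)
    (Q : Type) (_ : AddCommGroup Q) (_ : DistribMulAction G Q),
    IsPermLat G P ∧ IsPermLat G Q ∧
    ∃ e : (M × P) ≃+ Q, IsEquivMapP G e

/-- `M` is permutation projective: a direct summand of a permutation lattice. -/
def IsPermProj (M : Type) [AddCommGroup M] [DistribMulAction G M] : Prop :=
  ∃ (P : Type) (_ : AddCommGroup P) (_ : DistribMulAction G P), IsPermLat G P ∧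
    ∃ (i : M →+ P) (r : P →+ M), IsEquivMapP G i ∧ IsEquivMapP G r ∧ ∀ m, r (i m) = m

/-- `M` is quasi-permutation: it embeds into a permutation lattice with permutation quotient. -/
def IsQuasiPerm (M : Type) [AddCommGroup M] [DistribMulAction G M] : Prop :=
  ∃ (P : Type) (_ : AddCommGroup P) (_ : DistribMulAction G P)
    (Q : Type) (_ : AddCommGroup Q) (_ : DistribMulAction G Q),
    IsPermLat G P ∧ IsPermLat G Q ∧ ShortExactG G M P Q

variable (M : Type) [AddCommGroup M] [DistribMulAction G M]

/-- 1-cocycles. -/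
def Z1 : AddSubgroup (G → M) where
  carrier := {f | ∀ g h : G, f (g * h) = g • f h + f g}
  zero_mem' := by intro g h; simp
  add_mem' := by
    intro f f' hf hf' g h
    simp only [Pi.add_apply, hf g h, hf' g h, smul_add]; abel
  neg_mem' := by
    intro f hf g h
    simp only [Pi.neg_apply, hf g h, smul_neg]; abel

/-- The coboundary homomorphism. -/
def coboundHom : M →+ Z1 G M where
  toFun m := ⟨fun g => g • m - m, by intro g h; simp only [mul_smul, smul_sub]; abel⟩
  map_zero' := by apply Subtype.ext; funext g; simp
  map_add' := by
    intro a b; apply Subtype.ext; funext g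
    show g • (a + b) - (a + b) = (g • a - a) + (g • b - b)
    simp only [smul_add]; abel

/-- 1-coboundaries. -/
def B1 : AddSubgroup (Z1 G M) := (coboundHom G M).range

/-- First group cohomology `H¹(G, M)`. -/
abbrev H1 := Z1 G M ⧸ B1 G M

/-- Restriction of cocycles to a subgroup. -/
def resZ1 (H : Subgroup G) : Z1 G M →+ Z1 H M where
  toFun f := ⟨fun h => f.1 h, by
    intro a b
    have := f.2 (a : G) (b : G)
    exact this⟩
  map_zero' := rfl
  map_add' := fun _ _ => rfl

/-- Restriction on `H¹`. -/
def resH1 (H : Subgroup G) : H1 G M →+ H1 H M :=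
  QuotientAddGroup.map _ _ (resZ1 G M H) (by
    rintro _ ⟨m, rfl⟩
    exact ⟨m, Subtype.ext rfl⟩)

/-- `Ш¹(G, M)`. -/
def Sha1 : AddSubgroup (H1 G M) :=
  ⨅ g : G, (resH1 G M (Subgroup.zpowers g)).ker

/-- `M` is coflasque: `H¹(H, M) = 0` for all subgroups `H ≤ G`. -/
def IsCoflasque : Prop := ∀ H : Subgroup G, ∀ x y : H1 H M, x = y

end Core

section Core2
variable (G : Type) [Group G] (M : Type) [AddCommGroup M] [DistribMulAction G M]

/-- 2-cocycles. -/
def Z2 : AddSubgroup (G → G → M) where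
  carrier := {f | ∀ g h k : G, g • f h k - f (g * h) k + f g (h * k) - f g h = 0}
  zero_mem' := by intro g h k; simp
  add_mem' := by
    intro f f' hf hf' g h k
    have h1 := hf g h k; have h2 := hf' g h k
    simp only [Pi.add_apply, smul_add]
    calc g • f h k + g • f' h k - (f (g * h) k + f' (g * h) k) +
          (f g (h * k) + f' g (h * k)) - (f g h + f' g h)
        = (g • f h k - f (g * h) k + f g (h * k) - f g h) +
          (g • f' h k - f' (g * h) k + f' g (h * k) - f' g h) := by abel
      _ = 0 := by rw [h1, h2, add_zero]
  neg_mem' := by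
    intro f hf g h k
    have h1 := hf g h k
    simp only [Pi.neg_apply, smul_neg]
    calc -(g • f h k) - -f (g * h) k + -f g (h * k) - -f g h
        = -(g • f h k - f (g * h) k + f g (h * k) - f g h) := by abel
      _ = 0 := by rw [h1, neg_zero]

/-- The 2-coboundary homomorphism. -/
def cobound2Hom : (G → M) →+ Z2 G M where
  toFun u := ⟨fun g h => g • u h - u (g * h) + u g, by
    intro g h k
    simp only [mul_smul, smul_sub, smul_add, mul_assoc]
    abel⟩
  map_zero' := by apply Subtype.ext; funext g h; simp
  map_add' := by
    intro a b; apply Subtype.ext; funext g h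
    show g • (a h + b h) - (a (g * h) + b (g * h)) + (a g + b g)
        = (g • a h - a (g * h) + a g) + (g • b h - b (g * h) + b g)
    simp only [smul_add]; abel

/-- 2-coboundaries. -/
def B2 : AddSubgroup (Z2 G M) := (cobound2Hom G M).range

/-- Second group cohomology `H²(G, M)`. -/
abbrev H2 := Z2 G M ⧸ B2 G M

/-- Restriction of 2-cocycles to a subgroup. -/
def resZ2 (H : Subgroup G) : Z2 G M →+ Z2 H M where
  toFun f := ⟨fun a b => f.1 a b, by
    intro a b c
    have := f.2 (a : G) (b : G) (c : G)
    exact this⟩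
  map_zero' := rfl
  map_add' := fun _ _ => rfl

/-- Restriction on `H²`. -/
def resH2 (H : Subgroup G) : H2 G M →+ H2 H M :=
  QuotientAddGroup.map _ _ (resZ2 G M H) (by
    rintro _ ⟨u, rfl⟩
    exact ⟨fun h : H => u (h : G), Subtype.ext rfl⟩)

/-- `Ш²(G, M)`. -/
def Sha2 : AddSubgroup (H2 G M) :=
  ⨅ g : G, (resH2 G M (Subgroup.zpowers g)).ker

/-- The subgroup `2M`. -/
def twoSub : AddSubgroup M :=
  (AddMonoidHom.mk' (fun m : M => (2 : ℤ) • m) (by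
    intro a b
    show (2 : ℤ) • (a + b) = (2 : ℤ) • a + (2 : ℤ) • b
    rw [smul_add])).range

/-- `M/2M`. -/
abbrev ModTwo := M ⧸ twoSub M

noncomputable instance : SMul G (ModTwo M) :=
  ⟨fun g => QuotientAddGroup.map _ _ (DistribMulAction.toAddMonoidHom M g) (by
    rintro _ ⟨m, rfl⟩
    refine ⟨g • m, ?_⟩
    show (2 : ℤ) • (g • m) = g • ((2 : ℤ) • m)
    rw [smul_comm])⟩

theorem modTwo_smul_mk (g : G) (m : M) :
    g • (QuotientAddGroup.mk m : ModTwo M) = QuotientAddGroup.mk (g • m) := rfl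

noncomputable instance : DistribMulAction G (ModTwo M) where
  one_smul x := by
    obtain ⟨m, rfl⟩ := QuotientAddGroup.mk_surjective x
    rw [modTwo_smul_mk, one_smul]
  mul_smul g h x := by
    obtain ⟨m, rfl⟩ := QuotientAddGroup.mk_surjective x
    rw [modTwo_smul_mk, modTwo_smul_mk, modTwo_smul_mk, mul_smul]
  smul_zero g := map_zero (QuotientAddGroup.map _ _ (DistribMulAction.toAddMonoidHom M g) _)
  smul_add g x y := map_add (QuotientAddGroup.map _ _ (DistribMulAction.toAddMonoidHom M g) _) x y

variable [Finite G]

/-- Kernel of the norm map (for a finite group). -/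
def normKer : AddSubgroup M where
  carrier := {x | ∑ᶠ g : G, g • x = 0}
  zero_mem' := by simp
  add_mem' := by
    intro x y hx hy
    have hx' : ∑ᶠ g : G, g • x = 0 := hx
    have hy' : ∑ᶠ g : G, g • y = 0 := hy
    show ∑ᶠ g : G, g • (x + y) = 0
    simp only [smul_add]
    rw [finsum_add_distrib (Set.toFinite _) (Set.toFinite _), hx', hy', add_zero]
  neg_mem' := by
    intro x hx
    have hx' : ∑ᶠ g : G, g • x = 0 := hx
    show ∑ᶠ g : G, g • (-x) = 0
    simp only [smul_neg]
    rw [finsum_neg_distrib, hx', neg_zero]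

/-- The subgroup generated by elements `g • m - m`. -/
def augSub : AddSubgroup M := AddSubgroup.closure {x | ∃ (g : G) (m : M), x = g • m - m}

/-- Tate cohomology `Ĥ⁻¹(G, M)` (for a finite group `G`). -/
abbrev TateNeg1 := normKer G M ⧸ ((augSub G M).addSubgroupOf (normKer G M))

/-- `M` is flasque: `Ĥ⁻¹(H, M) = 0` for all subgroups `H ≤ G`. -/
def IsFlasque : Prop := ∀ H : Subgroup G, ∀ x y : TateNeg1 H M, x = y

end Core2

section Core3
variable (G : Type) [Group G]

/-- `M` is equivalent to a direct summand of a quasi-permutation `G`-lattice. -/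
def IsEquivSummandQP (M : Type) [AddCommGroup M] [DistribMulAction G M] : Prop :=
  ∃ (S : Type) (_ : AddCommGroup S) (_ : DistribMulAction G S)
    (D : Type) (_ : AddCommGroup D) (_ : DistribMulAction G D)
    (D' : Type) (_ : AddCommGroup D') (_ : DistribMulAction G D'),
    IsLat S ∧ IsQuasiPerm G S ∧ (∃ e : (D × D') ≃+ S, IsEquivMapP G e) ∧
    LatEquiv G M D

end Core3

section Tensor
open TensorProduct
variable (G : Type) [Group G] (M : Type) [AddCommGroup M] [DistribMulAction G M]

/-- The action of `g : G` as a `ℤ`-linear map. -/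
def gLin (g : G) : M →ₗ[ℤ] M := (DistribMulAction.toAddMonoidHom M g).toIntLinearMap

noncomputable instance tensorSMul : SMul G (M ⊗[ℤ] M) :=
  ⟨fun g => TensorProduct.map (gLin G M g) (gLin G M g)⟩

theorem tsmul_def (g : G) (x : M ⊗[ℤ] M) :
    g • x = TensorProduct.map (gLin G M g) (gLin G M g) x := rfl

theorem gLin_one : gLin G M 1 = LinearMap.id := by
  ext m; show (1 : G) • m = m; rw [one_smul]

theorem gLin_mul (g h : G) : gLin G M (g * h) = (gLin G M g).comp (gLin G M h) := by
  ext m; show (g * h) • m = g • h • m; rw [mul_smul]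

noncomputable instance tensorAct : DistribMulAction G (M ⊗[ℤ] M) where
  one_smul x := by rw [tsmul_def, gLin_one, TensorProduct.map_id]; rfl
  mul_smul g h x := by
    rw [tsmul_def, tsmul_def, tsmul_def, gLin_mul, TensorProduct.map_comp]; rfl
  smul_zero g := map_zero _
  smul_add g x y := map_add _ x y

/-- Generators of the symmetric relation. -/
def symSpan : Submodule ℤ (M ⊗[ℤ] M) :=
  Submodule.span ℤ {x | ∃ a b : M, x = a ⊗ₜ[ℤ] b - b ⊗ₜ[ℤ] a}

/-- Generators of the wedge relation. -/
def wedSpan : Submodule ℤ (M ⊗[ℤ] M) :=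
  Submodule.span ℤ {x | ∃ a : M, x = a ⊗ₜ[ℤ] a}

/-- The second symmetric power `Sym²M`. -/
abbrev Sym2Q := (M ⊗[ℤ] M) ⧸ symSpan M

/-- The second exterior power `∧²M`. -/
abbrev Wedge2Q := (M ⊗[ℤ] M) ⧸ wedSpan M

theorem symSpan_le_comap (g : G) :
    symSpan M ≤ (symSpan M).comap (TensorProduct.map (gLin G M g) (gLin G M g)) := by
  refine Submodule.span_le.2 ?_
  rintro _ ⟨a, b, rfl⟩
  show TensorProduct.map (gLin G M g) (gLin G M g) (a ⊗ₜ[ℤ] b - b ⊗ₜ[ℤ] a) ∈ symSpan M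
  rw [map_sub, TensorProduct.map_tmul, TensorProduct.map_tmul]
  exact Submodule.subset_span ⟨g • a, g • b, rfl⟩

theorem wedSpan_le_comap (g : G) :
    wedSpan M ≤ (wedSpan M).comap (TensorProduct.map (gLin G M g) (gLin G M g)) := by
  refine Submodule.span_le.2 ?_
  rintro _ ⟨a, rfl⟩
  show TensorProduct.map (gLin G M g) (gLin G M g) (a ⊗ₜ[ℤ] a) ∈ wedSpan M
  rw [TensorProduct.map_tmul]
  exact Submodule.subset_span ⟨g • a, rfl⟩

noncomputable instance sym2SMul : SMul G (Sym2Q M) :=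
  ⟨fun g => Submodule.mapQ _ _ (TensorProduct.map (gLin G M g) (gLin G M g))
    (symSpan_le_comap G M g)⟩

noncomputable instance wedge2SMul : SMul G (Wedge2Q M) :=
  ⟨fun g => Submodule.mapQ _ _ (TensorProduct.map (gLin G M g) (gLin G M g))
    (wedSpan_le_comap G M g)⟩

theorem sym2_smul_mk (g : G) (x : M ⊗[ℤ] M) :
    g • ((symSpan M).mkQ x) = (symSpan M).mkQ (g • x) :=
  Submodule.mapQ_apply _ _ _ _

theorem wedge2_smul_mk (g : G) (x : M ⊗[ℤ] M) :
    g • ((wedSpan M).mkQ x) = (wedSpan M).mkQ (g • x) :=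
  Submodule.mapQ_apply _ _ _ _

noncomputable instance sym2Act : DistribMulAction G (Sym2Q M) where
  one_smul x := by
    obtain ⟨y, rfl⟩ := (symSpan M).mkQ_surjective x
    rw [sym2_smul_mk, one_smul]
  mul_smul g h x := by
    obtain ⟨y, rfl⟩ := (symSpan M).mkQ_surjective x
    rw [sym2_smul_mk, sym2_smul_mk, sym2_smul_mk, mul_smul]
  smul_zero g := by
    rw [← map_zero (symSpan M).mkQ, sym2_smul_mk, smul_zero]
  smul_add g x y := by
    obtain ⟨x, rfl⟩ := (symSpan M).mkQ_surjective x
    obtain ⟨y, rfl⟩ := (symSpan M).mkQ_surjective y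
    rw [← map_add (symSpan M).mkQ, sym2_smul_mk, sym2_smul_mk, sym2_smul_mk, smul_add, map_add]

noncomputable instance wedge2Act : DistribMulAction G (Wedge2Q M) where
  one_smul x := by
    obtain ⟨y, rfl⟩ := (wedSpan M).mkQ_surjective x
    rw [wedge2_smul_mk, one_smul]
  mul_smul g h x := by
    obtain ⟨y, rfl⟩ := (wedSpan M).mkQ_surjective x
    rw [wedge2_smul_mk, wedge2_smul_mk, wedge2_smul_mk, mul_smul]
  smul_zero g := by
    rw [← map_zero (wedSpan M).mkQ, wedge2_smul_mk, smul_zero]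
  smul_add g x y := by
    obtain ⟨x, rfl⟩ := (wedSpan M).mkQ_surjective x
    obtain ⟨y, rfl⟩ := (wedSpan M).mkQ_surjective y
    rw [← map_add (wedSpan M).mkQ, wedge2_smul_mk, wedge2_smul_mk, wedge2_smul_mk, smul_add, map_add]

variable {M} {N : Type} [AddCommGroup N]

/-- The map `Sym²f` induced by a linear map `f`. -/
noncomputable def sym2Map (f : M →ₗ[ℤ] N) : Sym2Q M →ₗ[ℤ] Sym2Q N :=
  Submodule.mapQ _ _ (TensorProduct.map f f) (by
    refine Submodule.span_le.2 ?_
    rintro _ ⟨a, b, rfl⟩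
    show TensorProduct.map f f (a ⊗ₜ[ℤ] b - b ⊗ₜ[ℤ] a) ∈ symSpan N
    rw [map_sub, TensorProduct.map_tmul, TensorProduct.map_tmul]
    exact Submodule.subset_span ⟨f a, f b, rfl⟩)

/-- The map `∧²f` induced by a linear map `f`. -/
noncomputable def wedge2Map (f : M →ₗ[ℤ] N) : Wedge2Q M →ₗ[ℤ] Wedge2Q N :=
  Submodule.mapQ _ _ (TensorProduct.map f f) (by
    refine Submodule.span_le.2 ?_
    rintro _ ⟨a, rfl⟩
    show TensorProduct.map f f (a ⊗ₜ[ℤ] a) ∈ wedSpan N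
    rw [TensorProduct.map_tmul]
    exact Submodule.subset_span ⟨f a, rfl⟩)

end Tensor

section PermMod
variable (G : Type) [Group G] (X : Type) [MulAction G X]

/-- The permutation action on `ℤ[X] = X → ℤ`. -/
instance permSMul : SMul G (X → ℤ) := ⟨fun g f x => f (g⁻¹ • x)⟩

theorem perm_smul_def (g : G) (f : X → ℤ) (x : X) : (g • f) x = f (g⁻¹ • x) := rfl

instance permAct : DistribMulAction G (X → ℤ) where
  one_smul f := funext fun x => by rw [perm_smul_def, inv_one, one_smul]
  mul_smul g h f := funext fun x => by
    rw [perm_smul_def, perm_smul_def, perm_smul_def, mul_inv_rev, mul_smul]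
  smul_zero g := rfl
  smul_add g f f' := rfl

variable [Fintype X]

/-- The augmentation kernel `A = ker(ℤ[X] → ℤ)`. -/
def augKer : AddSubgroup (X → ℤ) where
  carrier := {f | ∑ x, f x = 0}
  zero_mem' := by simp
  add_mem' := by
    intro a b ha hb
    have ha' : ∑ x, a x = 0 := ha
    have hb' : ∑ x, b x = 0 := hb
    show ∑ x, (a x + b x) = 0
    rw [Finset.sum_add_distrib, ha', hb', add_zero]
  neg_mem' := by
    intro a ha
    have ha' : ∑ x, a x = 0 := ha
    show ∑ x, (-(a x)) = 0
    rw [Finset.sum_neg_distrib, ha', neg_zero]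

theorem smul_mem_augKer (g : G) (f : X → ℤ) (hf : f ∈ augKer X) :
    g • f ∈ augKer X := by
  have hf' : ∑ x, f x = 0 := hf
  show ∑ x, f (g⁻¹ • x) = 0
  exact (Equiv.sum_comp (MulAction.toPerm (g⁻¹ : G)) f).trans hf'

instance augKerSMul : SMul G (augKer X) :=
  ⟨fun g f => ⟨g • (f : X → ℤ), smul_mem_augKer G X g f f.2⟩⟩

theorem augKer_smul_def (g : G) (f : augKer X) :
    ((g • f : augKer X) : X → ℤ) = g • (f : X → ℤ) := rfl

instance augKerAct : DistribMulAction G (augKer X) where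
  one_smul f := Subtype.ext (by rw [augKer_smul_def, one_smul])
  mul_smul g h f := Subtype.ext (by
    rw [augKer_smul_def, augKer_smul_def, augKer_smul_def, mul_smul])
  smul_zero g := Subtype.ext (by
    rw [augKer_smul_def]
    show g • (0 : X → ℤ) = 0
    rw [smul_zero])
  smul_add g f f' := Subtype.ext (by
    show g • ((f : X → ℤ) + f') = g • (f : X → ℤ) + g • (f' : X → ℤ)
    rw [smul_add])

end PermMod

section P2sec
variable (G : Type) [Group G]

/-- The set of 2-element subsets of `X`. -/
def P2 (X : Type) [DecidableEq X] : Type := {s : Finset X // s.card = 2}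

noncomputable instance (X : Type) [DecidableEq X] [Fintype X] : Fintype (P2 X) := by
  unfold P2; infer_instance

instance p2SMul (X : Type) [DecidableEq X] [MulAction G X] : SMul G (P2 X) :=
  ⟨fun g s => ⟨s.1.image (fun x => g • x), by
    rw [Finset.card_image_of_injective _ (MulAction.injective g)]; exact s.2⟩⟩

theorem p2_smul_def (X : Type) [DecidableEq X] [MulAction G X] (g : G) (s : P2 X) :
    (g • s).1 = s.1.image (fun x => g • x) := rfl

instance p2Act (X : Type) [DecidableEq X] [MulAction G X] : MulAction G (P2 X) where
  one_smul s := Subtype.ext (by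
    rw [p2_smul_def]
    simp)
  mul_smul g h s := Subtype.ext (by
    simp only [p2_smul_def, Finset.image_image]
    refine Finset.image_congr ?_
    intro x _
    exact mul_smul g h x)

end P2sec

/-- The root lattice `A_{n-1}` as an `S_n`-lattice. -/
abbrev rootLat (n : ℕ) := augKer (Fin n)



/-! ### Infrastructure for the proof -/

section CTInfra
open Subgroup
variable {K : Type} [Group K]
variable {A B C : Type} [AddCommGroup A] [AddCommGroup B] [AddCommGroup C]
variable [DistribMulAction K A] [DistribMulAction K B] [DistribMulAction K C]

theorem isEquivMapP_subgroup (H : Subgroup K) {φ : A → B} (hφ : IsEquivMapP K φ) :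
    IsEquivMapP (↥H) φ := fun h m => hφ (↑h) m

/-- Push a 1-cocycle along an equivariant hom. -/
def z1Push (φ : A →+ B) (hφ : IsEquivMapP K φ) (f : Z1 K A) : Z1 K B :=
  ⟨fun g => φ (f.1 g), by
    intro g h
    show φ (f.1 (g * h)) = g • φ (f.1 h) + φ (f.1 g)
    rw [f.2 g h, map_add, hφ]⟩

/-- Push a 2-cocycle along an equivariant hom. -/
def z2Push (φ : A →+ B) (hφ : IsEquivMapP K φ) (c : Z2 K A) : Z2 K B :=
  ⟨fun g h => φ (c.1 g h), by
    intro g h k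
    have h0 := c.2 g h k
    have h1 : φ (g • c.1 h k - c.1 (g*h) k + c.1 g (h*k) - c.1 g h) = φ 0 := by rw [h0]
    have hφ' : ∀ (g : K) (m : A), φ (g • m) = g • φ m := hφ
    simpa [map_add, map_sub, hφ'] using h1⟩

theorem mem_B1_iff {f : Z1 K A} : f ∈ B1 K A ↔ ∃ m : A, ∀ g : K, f.1 g = g • m - m := by
  constructor
  · rintro ⟨m, rfl⟩; exact ⟨m, fun g => rfl⟩
  · rintro ⟨m, hm⟩
    exact ⟨m, Subtype.ext (funext fun g => (hm g).symm)⟩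

theorem mem_B2_iff {c : Z2 K A} :
    c ∈ B2 K A ↔ ∃ u : K → A, ∀ g h : K, c.1 g h = g • u h - u (g*h) + u g := by
  constructor
  · rintro ⟨u, rfl⟩; exact ⟨u, fun g h => rfl⟩
  · rintro ⟨u, hu⟩
    exact ⟨u, Subtype.ext (funext fun g => funext fun h => (hu g h).symm)⟩

theorem resZ2_coe (H : Subgroup K) (c : Z2 K A) (a b : H) :
    (resZ2 K A H c).1 a b = c.1 ↑a ↑b := rfl

theorem resZ1_coe (H : Subgroup K) (f : Z1 K A) (a : H) :
    (resZ1 K A H f).1 a = f.1 ↑a := rfl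

/-- `H¹(K, A)` is trivial (every cocycle is a coboundary). -/
def H1Triv (K A : Type) [Group K] [AddCommGroup A] [DistribMulAction K A] : Prop :=
  ∀ f : Z1 K A, f ∈ B1 K A

/-- `Ш²(K, A)` is trivial at the cocycle level. -/
def Sha2Triv (K A : Type) [Group K] [AddCommGroup A] [DistribMulAction K A] : Prop :=
  ∀ c : Z2 K A, (∀ g : K, resZ2 K A (zpowers g) c ∈ B2 (↥(zpowers g)) A) → c ∈ B2 K A

theorem cycres_push (φ : A →+ B) (hφ : IsEquivMapP K φ) {c : Z2 K A}
    (h : ∀ g : K, resZ2 K A (zpowers g) c ∈ B2 (↥(zpowers g)) A) :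
    ∀ g : K, resZ2 K B (zpowers g) (z2Push φ hφ c) ∈ B2 (↥(zpowers g)) B := by
  intro g
  obtain ⟨u, hu⟩ := mem_B2_iff.1 (h g)
  have hφ' := isEquivMapP_subgroup (zpowers g) hφ
  refine mem_B2_iff.2 ⟨fun a => φ (u a), fun a b => ?_⟩
  have h1 : (resZ2 K B (zpowers g) (z2Push φ hφ c)).1 a b = φ ((resZ2 K A (zpowers g) c).1 a b) := rfl
  rw [h1, hu a b, map_add, map_sub, hφ' a]

theorem H1Triv_of_retract (i : A →+ B) (r : B →+ A) (hi : IsEquivMapP K i)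
    (hr : IsEquivMapP K r) (hri : ∀ a, r (i a) = a) (hB : H1Triv K B) : H1Triv K A := by
  intro f
  obtain ⟨m, hm⟩ := mem_B1_iff.1 (hB (z1Push i hi f))
  refine mem_B1_iff.2 ⟨r m, fun g => ?_⟩
  have h1 := congrArg r (hm g)
  rw [map_sub, hr] at h1
  rw [← h1]; exact (hri _).symm

theorem Sha2Triv_of_retract (i : A →+ B) (r : B →+ A) (hi : IsEquivMapP K i)
    (hr : IsEquivMapP K r) (hri : ∀ a, r (i a) = a) (hB : Sha2Triv K B) : Sha2Triv K A := by
  intro c hc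
  obtain ⟨u, hu⟩ := mem_B2_iff.1 (hB _ (cycres_push i hi hc))
  refine mem_B2_iff.2 ⟨fun g => r (u g), fun g h => ?_⟩
  have h1 := congrArg r (hu g h)
  rw [map_add, map_sub, hr] at h1
  rw [← h1]
  exact (hri _).symm

end CTInfra


section CTSES
open Subgroup
variable {K : Type} [Group K]
variable {A B C : Type} [AddCommGroup A] [AddCommGroup B] [AddCommGroup C]
variable [DistribMulAction K A] [DistribMulAction K B] [DistribMulAction K C]

theorem exists_pre_of_ker {i : A →+ B} {p : B →+ C} (hker : i.range = p.ker)
    {x : B} (hx : p x = 0) : ∃ a : A, i a = x := by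
  have h1 : x ∈ p.ker := AddMonoidHom.mem_ker.mpr hx
  rw [← hker] at h1
  exact h1

theorem eq_of_dexpr {B : Type} [AddCommGroup B] {X Y Z : B} (h : X - Y + Z = 0) : Y = X + Z := by
  have h3 : Y - (X + Z) = -(X - Y + Z) := by abel
  rw [h, neg_zero] at h3
  exact sub_eq_zero.mp h3

theorem d_sub_cobound {K B : Type} [Group K] [AddCommGroup B] [DistribMulAction K B]
    (t : K → B) (yb : B) (g h : K) :
    g • (t h - (h • yb - yb)) - (t (g*h) - ((g*h) • yb - yb)) + (t g - (g • yb - yb))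
      = g • t h - t (g*h) + t g := by
  rw [smul_sub, smul_sub, mul_smul]; abel

theorem subgroup_smul_eq {K B : Type} [Group K] [AddCommGroup B] [DistribMulAction K B]
    (H : Subgroup K) (a : ↥H) (x : B) : a • x = (a : K) • x := rfl

theorem Sha2Triv_of_sub (i : A →+ B) (p : B →+ C) (hi : IsEquivMapP K i) (hp : IsEquivMapP K p)
    (hinj : Injective i) (hsurj : Surjective p) (hker : i.range = p.ker)
    (hB : Sha2Triv K B) (hC : H1Triv K C) : Sha2Triv K A := by
  have hp' : ∀ (g : K) (m : B), p (g • m) = g • p m := hp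
  have hi' : ∀ (g : K) (m : A), i (g • m) = g • i m := hi
  intro c hc
  obtain ⟨u, hu⟩ := mem_B2_iff.1 (hB _ (cycres_push i hi hc))
  have hu' : ∀ g h : K, i (c.1 g h) = g • u h - u (g*h) + u g := hu
  have hpi : ∀ a : A, p (i a) = 0 := by
    intro a
    have h2 : i a ∈ p.ker := hker ▸ AddMonoidHom.mem_range.2 ⟨a, rfl⟩
    exact AddMonoidHom.mem_ker.mp h2
  have hpu : ∀ g h : K, p (u (g*h)) = g • p (u h) + p (u g) := by
    intro g h
    have h1 := congrArg p (hu' g h)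
    rw [hpi, map_add, map_sub, hp'] at h1
    exact eq_of_dexpr h1.symm
  obtain ⟨q, hq⟩ := mem_B1_iff.1 (hC ⟨fun g => p (u g), hpu⟩)
  have hq' : ∀ g : K, p (u g) = g • q - q := hq
  obtain ⟨w, hw⟩ := hsurj q
  have h0 : ∀ g : K, p (u g - (g • w - w)) = 0 := by
    intro g
    rw [map_sub, map_sub, hp', hw, hq' g, sub_self]
  choose v hv using fun g : K => exists_pre_of_ker hker (h0 g)
  refine mem_B2_iff.2 ⟨v, fun g h => ?_⟩
  apply hinj
  rw [map_add, map_sub, hi', hv, hv, hv, hu' g h, d_sub_cobound]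

theorem Sha2Triv_of_ext (i : A →+ B) (p : B →+ C) (hi : IsEquivMapP K i) (hp : IsEquivMapP K p)
    (hinj : Injective i) (hsurj : Surjective p) (hker : i.range = p.ker)
    (hA : Sha2Triv K A) (hC : Sha2Triv K C)
    (hCc : ∀ H : Subgroup K, H1Triv (↥H) C) : Sha2Triv K B := by
  have hp' : ∀ (g : K) (m : B), p (g • m) = g • p m := hp
  have hi' : ∀ (g : K) (m : A), i (g • m) = g • i m := hi
  have hpi : ∀ a : A, p (i a) = 0 := by
    intro a
    have h2 : i a ∈ p.ker := hker ▸ AddMonoidHom.mem_range.2 ⟨a, rfl⟩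
    exact AddMonoidHom.mem_ker.mp h2
  intro c hc
  obtain ⟨q, hq⟩ := mem_B2_iff.1 (hC _ (cycres_push p hp hc))
  have hq' : ∀ g h : K, p (c.1 g h) = g • q h - q (g*h) + q g := hq
  choose w hw using fun g : K => hsurj (q g)
  set c' : Z2 K B := c - cobound2Hom K B w with hc'def
  have hc'1 : ∀ g h : K, c'.1 g h = c.1 g h - (g • w h - w (g*h) + w g) := fun g h => rfl
  have h0 : ∀ gh : K × K, p (c'.1 gh.1 gh.2) = 0 := by
    intro gh
    rw [hc'1, map_sub, hq' gh.1 gh.2, map_add, map_sub, hp', hw, hw, hw, sub_self]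
  choose v hv using fun gh : K × K => exists_pre_of_ker hker (h0 gh)
  have hv' : ∀ g h : K, i (v (g, h)) = c'.1 g h := fun g h => hv (g, h)
  have hvZ : (fun g h => v (g, h)) ∈ Z2 K A := by
    intro g h k
    apply hinj
    have hcc := c'.2 g h k
    simp only [map_sub, map_add, map_zero, hi', hv']
    exact hcc
  set vZ : Z2 K A := ⟨fun g h => v (g, h), hvZ⟩ with hvZdef
  have hvcyc : ∀ g₀ : K, resZ2 K A (zpowers g₀) vZ ∈ B2 (↥(zpowers g₀)) A := by
    intro g₀
    obtain ⟨s, hs⟩ := mem_B2_iff.1 (hc g₀)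
    have hs' : ∀ a b : ↥(zpowers g₀), c.1 ↑a ↑b = (a : K) • s b - s (a*b) + s a := hs
    set t : ↥(zpowers g₀) → B := fun a => s a - w ↑a with htdef
    have hdt : ∀ a b : ↥(zpowers g₀), i (v (↑a, ↑b)) = (a : K) • t b - t (a*b) + t a := by
      intro a b
      rw [hv', hc'1, hs' a b]
      show (a : K) • s b - s (a*b) + s a - ((a : K) • w ↑b - w (↑a * ↑b) + w ↑a)
          = (a : K) • (s b - w ↑b) - (s (a*b) - w ↑(a*b)) + (s a - w ↑a)
      have hab : ((a*b : ↥(zpowers g₀)) : K) = (a : K) * (b : K) := rfl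
      rw [smul_sub, hab]
      abel
    have hptz : ∀ a b : ↥(zpowers g₀), p (t (a*b)) = a • p (t b) + p (t a) := by
      intro a b
      have h1 := congrArg p (hdt a b)
      rw [hpi, map_add, map_sub, hp'] at h1
      rw [subgroup_smul_eq]
      exact eq_of_dexpr h1.symm
    obtain ⟨y, hy⟩ := mem_B1_iff.1 (hCc (zpowers g₀) ⟨fun a => p (t a), hptz⟩)
    have hy' : ∀ a : ↥(zpowers g₀), p (t a) = (a : K) • y - y := hy
    obtain ⟨yb, hyb⟩ := hsurj y
    have h0' : ∀ a : ↥(zpowers g₀), p (t a - ((a : K) • yb - yb)) = 0 := by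
      intro a
      have e1 : p (t a - ((a : K) • yb - yb)) = p (t a) - p ((a : K) • yb - yb) := map_sub p _ _
      have e2 : p ((a : K) • yb - yb) = (a : K) • p yb - p yb := by rw [map_sub, hp']
      rw [e1, e2, hyb, hy' a, sub_self]
    choose z hz using fun a : ↥(zpowers g₀) => exists_pre_of_ker hker (h0' a)
    refine mem_B2_iff.2 ⟨z, fun a b => ?_⟩
    apply hinj
    have hres : (resZ2 K A (zpowers g₀) vZ).1 a b = v (↑a, ↑b) := rfl
    rw [hres, subgroup_smul_eq]
    simp only [map_add, map_sub, hi', hz]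
    rw [hdt a b]
    rw [show ((a*b : ↥(zpowers g₀)) : K) = (a : K) * (b : K) from rfl]
    simp only [smul_sub, mul_smul]
    abel
  obtain ⟨m, hm⟩ := mem_B2_iff.1 (hA vZ hvcyc)
  have hm' : ∀ g h : K, v (g, h) = g • m h - m (g*h) + m g := hm
  refine mem_B2_iff.2 ⟨fun g => i (m g) + w g, fun g h => ?_⟩
  have h5 : i (v (g, h)) = i (g • m h - m (g*h) + m g) := congrArg i (hm' g h)
  rw [hv', hc'1] at h5
  have h6 := eq_add_of_sub_eq h5
  rw [h6, map_add, map_sub, hi', smul_add, sub_eq_add_neg _ (i (m (g*h)) + w (g*h)), neg_add]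
  abel_nf
  ac_rfl

end CTSES

section CTPerm
open Subgroup

noncomputable def orep (K : Type) {X : Type} [Group K] [MulAction K X] (x : X) : X :=
  (Quotient.mk (MulAction.orbitRel K X) x).out

theorem orep_mem (K : Type) {X : Type} [Group K] [MulAction K X] (x : X) :
    orep K x ∈ MulAction.orbit K x :=
  Quotient.exact (Quotient.out_eq (Quotient.mk (MulAction.orbitRel K X) x))

theorem orep_spec (K : Type) {X : Type} [Group K] [MulAction K X] (x : X) :
    ∃ g : K, g • orep K x = x := by
  obtain ⟨g, hg⟩ := orep_mem K x
  exact ⟨g⁻¹, by rw [← hg]; simp⟩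

theorem orep_smul (K : Type) {X : Type} [Group K] [MulAction K X] (g : K) (x : X) :
    orep K (g • x) = orep K x := by
  unfold orep
  congr 1
  exact Quotient.sound ⟨g, rfl⟩


theorem perm_H1Triv (K X : Type) [Group K] [Finite K] [MulAction K X] [Fintype X] :
    H1Triv K (X → ℤ) := by
  classical
  intro f
  have hf : ∀ g h : K, ∀ x : X, f.1 (g*h) x = f.1 h (g⁻¹ • x) + f.1 g x := by
    intro g h x
    exact congrFun (f.2 g h) x
  have hf1 : ∀ x, f.1 1 x = 0 := by
    intro x
    have h1 := hf 1 1 x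
    rw [one_mul, inv_one, one_smul] at h1
    omega
  have hfix : ∀ (s : K) (x : X), s • x = x → f.1 s x = 0 := by
    intro s x hsx
    have h2 : s⁻¹ • x = x := inv_smul_eq_iff.mpr hsx.symm
    have hlin : ∀ k : ℕ, f.1 (s^k) x = k * f.1 s x := by
      intro k
      induction k with
      | zero => rw [pow_zero, hf1]; simp
      | succ k ih =>
          have h1 := hf s (s^k) x
          rw [h2, ih, ← pow_succ'] at h1
          rw [h1]; push_cast; ring
    have h3 := hlin (orderOf s)
    rw [pow_orderOf_eq_one, hf1] at h3
    have h4 : (orderOf s : ℤ) ≠ 0 := by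
      exact_mod_cast (isOfFinOrder_of_finite s).orderOf_pos.ne'
    exact (mul_eq_zero.mp h3.symm).resolve_left h4
  choose gx hgx using fun x : X => orep_spec K x
  have hmain : ∀ g : K, ∀ x : X, f.1 g x = f.1 (gx x) x - f.1 (gx (g⁻¹ • x)) (g⁻¹ • x) := by
    intro g x
    set ρ := orep K x with hρ
    have hr1 : orep K (g⁻¹ • x) = ρ := orep_smul K g⁻¹ x
    set g₂ := gx (g⁻¹ • x) with hg2
    have hg2ρ : g₂ • ρ = g⁻¹ • x := by rw [hg2, ← hr1]; exact hgx (g⁻¹ • x)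
    set s := (gx x)⁻¹ * (g * g₂) with hs
    have hsρ : s • ρ = ρ := by
      rw [hs, mul_smul, mul_smul, hg2ρ, smul_inv_smul, inv_smul_eq_iff]
      exact (hgx x).symm
    have hA : f.1 (g * g₂) x = f.1 g₂ (g⁻¹ • x) + f.1 g x := hf g g₂ x
    have hB : f.1 (gx x * s) x = f.1 s ((gx x)⁻¹ • x) + f.1 (gx x) x := hf (gx x) s x
    have hgs : gx x * s = g * g₂ := by rw [hs, mul_inv_cancel_left]
    have hρx : (gx x)⁻¹ • x = ρ := by rw [inv_smul_eq_iff]; exact (hgx x).symm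
    rw [hgs, hρx, hfix s ρ hsρ, zero_add] at hB
    rw [hB] at hA
    omega
  refine mem_B1_iff.2 ⟨fun x => - f.1 (gx x) x, fun g => funext fun x => ?_⟩
  show f.1 g x = -f.1 (gx (g⁻¹ • x)) (g⁻¹ • x) - -f.1 (gx x) x
  have := hmain g x
  omega

theorem perm_Sha2Triv (K X : Type) [Group K] [Finite K] [MulAction K X] [Fintype X] :
    Sha2Triv K (X → ℤ) := by
  classical
  have : Fintype K := Fintype.ofFinite K
  intro c hc
  set n : ℕ := Fintype.card K with hn
  have hnpos : 0 < n := Fintype.card_pos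
  have hnq : ((n : ℕ) : ℚ) ≠ 0 := by exact_mod_cast hnpos.ne'
  set u : K → X → ℚ := fun g x => (∑ k : K, (c.1 g k x : ℚ)) / n with hudef
  have hcc : ∀ g h k : K, ∀ x : X,
      (c.1 h k (g⁻¹ • x) : ℚ) - c.1 (g*h) k x + c.1 g (h*k) x - c.1 g h x = 0 := by
    intro g h k x
    have h1 : c.1 h k (g⁻¹ • x) - c.1 (g*h) k x + c.1 g (h*k) x - c.1 g h x = (0:ℤ) :=
      congrFun (c.2 g h k) x
    exact_mod_cast h1
  have hu : ∀ g h : K, ∀ x : X, u h (g⁻¹ • x) - u (g*h) x + u g x = (c.1 g h x : ℚ) := by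
    intro g h x
    have h3 : ∑ k : K, ((c.1 h k (g⁻¹ • x) : ℚ) - c.1 (g*h) k x + c.1 g (h*k) x - c.1 g h x)
        = 0 := Finset.sum_eq_zero fun k _ => hcc g h k x
    rw [Finset.sum_sub_distrib, Finset.sum_add_distrib, Finset.sum_sub_distrib,
        Finset.sum_const, Finset.card_univ, nsmul_eq_mul] at h3
    have h4 : ∑ k : K, (c.1 g (h*k) x : ℚ) = ∑ k : K, (c.1 g k x : ℚ) :=
      Equiv.sum_comp (Equiv.mulLeft h) (fun k => (c.1 g k x : ℚ))
    rw [h4] at h3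
    have h6 : (∑ k : K, (c.1 h k (g⁻¹ • x) : ℚ)) - (∑ k : K, (c.1 (g*h) k x : ℚ))
        + (∑ k : K, (c.1 g k x : ℚ)) = (n : ℚ) * (c.1 g h x : ℚ) := by linarith [h3]
    show (∑ k : K, (c.1 h k (g⁻¹ • x) : ℚ)) / n - (∑ k : K, (c.1 (g*h) k x : ℚ)) / n
        + (∑ k : K, (c.1 g k x : ℚ)) / n = (c.1 g h x : ℚ)
    rw [← sub_div, ← add_div, h6, mul_div_cancel_left₀ _ hnq]
  have hfix : ∀ (s : K) (x : X), s • x = x → ∃ z : ℤ, u s x = (z : ℚ) := by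
    intro s x hsx
    obtain ⟨w, hw⟩ := mem_B2_iff.1 (hc s)
    set σ : ↥(zpowers s) := ⟨s, mem_zpowers s⟩ with hσdef
    have hcoe : ∀ k : ℕ, ((σ^k : ↥(zpowers s)) : K) = s^k := by
      intro k; induction k with
      | zero => simp
      | succ k ih => rw [pow_succ, pow_succ, ← ih]; rfl
    have hsinv : s⁻¹ • x = x := inv_smul_eq_iff.mpr hsx.symm
    set ψ : ℕ → ℚ := fun k => u (s^k) x - (w (σ^k) x : ℚ) with hψdef
    have hrel : ∀ k : ℕ, ψ (k+1) = ψ k + (u s x - (w σ x : ℚ)) := by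
      intro k
      have h1 := hu s (s^k) x
      rw [hsinv, ← pow_succ'] at h1
      have h2 : c.1 s (((σ^k : ↥(zpowers s)) : K)) x
          = w (σ^k) (s⁻¹ • x) - w (σ * σ^k) x + w σ x := congrFun (hw σ (σ^k)) x
      rw [hcoe k, hsinv, ← pow_succ'] at h2
      have h2q : (c.1 s (s^k) x : ℚ)
          = (w (σ^k) x : ℚ) - (w (σ^(k+1)) x : ℚ) + (w σ x : ℚ) := by exact_mod_cast h2
      show u (s^(k+1)) x - (w (σ^(k+1)) x : ℚ)
          = (u (s^k) x - (w (σ^k) x : ℚ)) + (u s x - (w σ x : ℚ))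
      rw [h2q] at h1
      linarith [h1]
    have hψ1 : ψ 1 = u s x - (w σ x : ℚ) := by
      show u (s^1) x - (w (σ^1) x : ℚ) = u s x - (w σ x : ℚ)
      rw [pow_one, pow_one]
    have hψ0 : ψ 0 = 0 := by
      have h1 := hrel 0
      rw [hψ1] at h1
      linarith
    have hlin : ∀ k : ℕ, ψ k = k * (u s x - (w σ x : ℚ)) := by
      intro k; induction k with
      | zero => rw [hψ0]; simp
      | succ k ih => rw [hrel k, ih]; push_cast; ring
    have hN := hlin (orderOf s)
    have hσN : σ ^ (orderOf s) = 1 := by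
      have hh : ((σ ^ (orderOf s) : ↥(zpowers s)) : K) = ((1 : ↥(zpowers s)) : K) := by
        rw [hcoe, pow_orderOf_eq_one]; rfl
      exact Subtype.coe_injective hh
    have hψN : ψ (orderOf s) = 0 := by
      show u (s^(orderOf s)) x - (w (σ^(orderOf s)) x : ℚ) = 0
      rw [pow_orderOf_eq_one, hσN]
      have h0 : ψ 0 = u 1 x - ((w 1 x : ℤ) : ℚ) := by
        show u (s^0) x - (w (σ^0) x : ℚ) = u 1 x - ((w 1 x : ℤ) : ℚ)
        rw [pow_zero, pow_zero]
      rw [← h0]; exact hψ0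
    rw [hψN] at hN
    have hNne : ((orderOf s : ℕ) : ℚ) ≠ 0 := by
      exact_mod_cast (isOfFinOrder_of_finite s).orderOf_pos.ne'
    have hδ : u s x - (w σ x : ℚ) = 0 := by
      rcases mul_eq_zero.mp hN.symm with h | h
      · exact absurd h hNne
      · exact h
    exact ⟨w σ x, by linarith⟩
  choose gx hgx using fun x : X => orep_spec K x
  have hmain : ∀ g : K, ∀ x : X,
      ∃ z : ℤ, u g x - u (gx x) x + u (gx (g⁻¹ • x)) (g⁻¹ • x) = (z : ℚ) := by
    intro g x
    set ρ := orep K x with hρdef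
    have hr1 : orep K (g⁻¹ • x) = ρ := orep_smul K g⁻¹ x
    set g₂ := gx (g⁻¹ • x) with hg2
    have hg2ρ : g₂ • ρ = g⁻¹ • x := by rw [hg2, ← hr1]; exact hgx (g⁻¹ • x)
    set s := (gx x)⁻¹ * (g * g₂) with hs
    have hsρ : s • ρ = ρ := by
      rw [hs, mul_smul, mul_smul, hg2ρ, smul_inv_smul, inv_smul_eq_iff]
      exact (hgx x).symm
    obtain ⟨z₁, hz₁⟩ := hfix s ρ hsρ
    have hA := hu g g₂ x
    have hB := hu (gx x) s x
    have hgs : gx x * s = g * g₂ := by rw [hs, mul_inv_cancel_left]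
    have hρx : (gx x)⁻¹ • x = ρ := by rw [inv_smul_eq_iff]; exact (hgx x).symm
    rw [hgs, hρx, hz₁] at hB
    refine ⟨c.1 g g₂ x - c.1 (gx x) s x + z₁, ?_⟩
    push_cast
    linarith [hA, hB]
  choose W hW using fun gp : K × X => hmain gp.1 gp.2
  refine mem_B2_iff.2 ⟨fun g x => W (g, x), fun g h => funext fun x => ?_⟩
  show c.1 g h x = W (h, g⁻¹ • x) - W (g*h, x) + W (g, x)
  have h1 := hW (h, g⁻¹ • x)
  have h2 := hW (g*h, x)
  have h3 := hW (g, x)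
  have hinv : (g*h)⁻¹ • x = h⁻¹ • (g⁻¹ • x) := by rw [mul_inv_rev, mul_smul]
  rw [hinv] at h2
  have hq : (c.1 g h x : ℚ) = ((W (h, g⁻¹ • x) : ℚ)) - W (g*h, x) + W (g, x) := by
    have h4 := hu g h x
    linarith [h1, h2, h3, h4]
  exact_mod_cast hq

-- the permutation-lattice transfer
theorem permLat_trivs {K P : Type} [Group K] [Finite K] [AddCommGroup P]
    [DistribMulAction K P] (h : IsPermLat K P) :
    ∃ (ι : Type) (_ : Fintype ι) (_ : MulAction K ι)
      (e : (ι → ℤ) ≃+ P), IsEquivMapP K e ∧ IsEquivMapP K e.symm := by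
  classical
  obtain ⟨ι, fin, b, σ, hσ⟩ := h
  letI : MulAction K ι :=
    { smul := fun g i => σ g i
      one_smul := fun i => b.injective (by show b (σ 1 i) = b i; rw [← hσ 1 i, one_smul])
      mul_smul := fun g h i => b.injective
        (by show b (σ (g*h) i) = b (σ g (σ h i))
            rw [← hσ (g*h) i, ← hσ g (σ h i), ← hσ h i, mul_smul]) }
  have hσinv : ∀ (g : K) (i : ι), σ g (σ g⁻¹ i) = i := fun g i => smul_inv_smul g i
  set E : (ι → ℤ) ≃+ P := b.equivFun.symm.toAddEquiv with hE
  have hEapp : ∀ cv : ι → ℤ, E cv = ∑ i, cv i • b i := fun cv => b.equivFun_symm_apply cv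
  have he : IsEquivMapP K (E : (ι → ℤ) → P) := by
    intro g cv
    have h1 : E (g • cv) = ∑ i, cv (σ g⁻¹ i) • b i := by
      rw [hEapp]
      exact Finset.sum_congr rfl fun i _ => rfl
    have h2 : g • E cv = ∑ i, cv i • b (σ g i) := by
      rw [hEapp, Finset.smul_sum]
      refine Finset.sum_congr rfl fun i _ => ?_
      rw [smul_comm, hσ g i]
    have h3 : ∑ i, cv i • b (σ g i) = ∑ i, cv (σ g⁻¹ i) • b i := by
      rw [← Equiv.sum_comp (MulAction.toPerm (g⁻¹ : K)) (fun i => cv i • b (σ g i))]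
      refine Finset.sum_congr rfl fun i _ => ?_
      show cv (σ g⁻¹ i) • b (σ g (σ g⁻¹ i)) = cv (σ g⁻¹ i) • b i
      rw [hσinv g i]
    rw [h1, h2, h3]
  have he' : IsEquivMapP K (E.symm : P → (ι → ℤ)) := by
    intro g p
    apply E.injective
    rw [E.apply_symm_apply, he g (E.symm p), E.apply_symm_apply]
  exact ⟨ι, fin, inferInstance, E, he, he'⟩

theorem permLat_H1_Sha {K P : Type} [Group K] [Finite K] [AddCommGroup P]
    [DistribMulAction K P] (h : IsPermLat K P) : H1Triv K P ∧ Sha2Triv K P := by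
  obtain ⟨ι, fin, act, E, he, he'⟩ := permLat_trivs h
  letI := fin
  letI := act
  constructor
  · exact H1Triv_of_retract E.symm.toAddMonoidHom E.toAddMonoidHom
      (fun g m => he' g m) (fun g m => he g m)
      (fun a => E.apply_symm_apply a) (perm_H1Triv K ι)
  · exact Sha2Triv_of_retract E.symm.toAddMonoidHom E.toAddMonoidHom
      (fun g m => he' g m) (fun g m => he g m)
      (fun a => E.apply_symm_apply a) (perm_Sha2Triv K ι)

theorem isPermLat_subgroup {K P : Type} [Group K] [AddCommGroup P] [DistribMulAction K P]
    (H : Subgroup K) (h : IsPermLat K P) : IsPermLat (↥H) P := by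
  obtain ⟨ι, fin, b, σ, hσ⟩ := h
  exact ⟨ι, fin, b, fun a => σ ↑a, fun a i => hσ ↑a i⟩

theorem shortExactG_subgroup {K M E P : Type} [Group K] [AddCommGroup M] [AddCommGroup E]
    [AddCommGroup P] [DistribMulAction K M] [DistribMulAction K E] [DistribMulAction K P]
    (H : Subgroup K) (h : ShortExactG K M E P) : ShortExactG (↥H) M E P := by
  obtain ⟨i, p, hi, hp, hinj, hsurj, hker⟩ := h
  exact ⟨i, p, isEquivMapP_subgroup H hi, isEquivMapP_subgroup H hp, hinj, hsurj, hker⟩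

end CTPerm


section CTFlasque
open Subgroup
variable {K F : Type} [Group K] [Finite K] [AddCommGroup F] [DistribMulAction K F]

theorem normKer_le_of_tate {C F' : Type} [Group C] [Finite C] [AddCommGroup F']
    [DistribMulAction C F'] (h : ∀ x y : TateNeg1 C F', x = y) :
    ∀ a : F', a ∈ normKer C F' → a ∈ augSub C F' := by
  intro a ha
  have h1 : (QuotientAddGroup.mk (⟨a, ha⟩ : normKer C F') : TateNeg1 C F') = 0 := h _ _
  have h2 := (QuotientAddGroup.eq_zero_iff _).1 h1
  exact (AddSubgroup.mem_addSubgroupOf).1 h2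

/-- The cocycle sum formula on a cyclic subgroup. -/
theorem z1_pow_sum (g : K) (f : Z1 (↥(zpowers g)) F) (k : ℕ) :
    f.1 ((⟨g, mem_zpowers g⟩ : ↥(zpowers g))^k)
      = ∑ j ∈ Finset.range k, ((⟨g, mem_zpowers g⟩ : ↥(zpowers g))^j) • f.1 ⟨g, mem_zpowers g⟩ := by
  set σ : ↥(zpowers g) := ⟨g, mem_zpowers g⟩ with hσ
  induction k with
  | zero =>
      rw [pow_zero, Finset.range_zero, Finset.sum_empty]
      have h1 := f.2 1 1
      rw [one_mul, one_smul] at h1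
      have h2 : f.1 1 + f.1 1 = f.1 1 + 0 := by rw [add_zero, ← h1]
      exact add_left_cancel h2
  | succ k ih =>
      have h1 := f.2 σ (σ^k)
      rw [← pow_succ'] at h1
      rw [h1, ih, Finset.smul_sum, Finset.sum_range_succ']
      have h3 : ∀ j, σ • (σ^j) • f.1 σ = (σ^(j+1)) • f.1 σ := by
        intro j
        rw [← mul_smul, ← pow_succ']
      have h4 : (σ^(0:ℕ)) • f.1 σ = f.1 σ := by rw [pow_zero, one_smul]
      rw [h4]
      refine congrArg (· + f.1 σ) ?_
      exact Finset.sum_congr rfl fun j _ => h3 j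

theorem telescope_smul (g : K) (m : F) (k : ℕ) :
    ∑ j ∈ Finset.range k,
        ((⟨g, mem_zpowers g⟩ : ↥(zpowers g))^j) • ((⟨g, mem_zpowers g⟩ : ↥(zpowers g)) • m - m)
      = ((⟨g, mem_zpowers g⟩ : ↥(zpowers g))^k) • m - m := by
  set σ : ↥(zpowers g) := ⟨g, mem_zpowers g⟩ with hσ
  induction k with
  | zero => rw [Finset.range_zero, Finset.sum_empty, pow_zero, one_smul, sub_self]
  | succ k ih =>
      rw [Finset.sum_range_succ, ih, smul_sub, ← mul_smul, ← pow_succ]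
      abel

theorem coe_pow_subtype (g : K) (k : ℕ) :
    (((⟨g, mem_zpowers g⟩ : ↥(zpowers g))^k : ↥(zpowers g)) : K) = g^k := by
  induction k with
  | zero => simp
  | succ k ih => rw [pow_succ, pow_succ, ← ih]; rfl

theorem flasque_cyclic_H1 (g : K)
    (hfl : ∀ x y : TateNeg1 (↥(zpowers g)) F, x = y) :
    H1Triv (↥(zpowers g)) F := by
  classical
  letI : Fintype ↥(zpowers g) := Fintype.ofFinite _
  intro f
  set σ : ↥(zpowers g) := ⟨g, mem_zpowers g⟩ with hσdef
  set a : F := f.1 σ with hadef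
  have hg : IsOfFinOrder g := isOfFinOrder_of_finite g
  set n : ℕ := orderOf g with hndef
  have hσn : σ^n = 1 := by
    have hh : ((σ^n : ↥(zpowers g)) : K) = ((1 : ↥(zpowers g)) : K) := by
      rw [coe_pow_subtype, pow_orderOf_eq_one]; rfl
    exact Subtype.coe_injective hh
  have hzero : ∑ j ∈ Finset.range n, (σ^j) • a = 0 := by
    have h1 := z1_pow_sum g f n
    rw [hσn] at h1
    have h2 := z1_pow_sum g f 0
    rw [pow_zero, Finset.range_zero, Finset.sum_empty] at h2
    rw [← h1, h2]
  -- a is in the norm kernel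
  have hnorm : a ∈ normKer (↥(zpowers g)) F := by
    show ∑ᶠ h : ↥(zpowers g), h • a = 0
    rw [finsum_eq_sum_of_fintype]
    have hsurj : ∀ h : ↥(zpowers g), ∃ j : Fin n, σ^(j:ℕ) = h := by
      intro h
      obtain ⟨k, hk⟩ := hg.mem_powers_iff_mem_zpowers.2 h.2
      refine ⟨⟨k % n, Nat.mod_lt _ hg.orderOf_pos⟩, ?_⟩
      apply Subtype.coe_injective
      show ((σ^(k % n) : ↥(zpowers g)) : K) = (h : K)
      rw [coe_pow_subtype, ← hk]
      show g^(k % n) = g^k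
      conv_rhs => rw [← Nat.div_add_mod k n]
      rw [pow_add, pow_mul, pow_orderOf_eq_one, one_pow, one_mul]
    have hinj : ∀ j j' : Fin n, σ^(j:ℕ) = σ^(j':ℕ) → j = j' := by
      intro j j' hjj
      have h6 : g^(j:ℕ) = g^(j':ℕ) := by
        rw [← coe_pow_subtype g (j:ℕ), ← coe_pow_subtype g (j':ℕ), hjj]
      have h7 := pow_eq_pow_iff_modEq.1 h6
      rw [Nat.ModEq, Nat.mod_eq_of_lt j.2, Nat.mod_eq_of_lt j'.2] at h7
      exact Fin.ext h7
    set e : Fin n ≃ ↥(zpowers g) := Equiv.ofBijective (fun j => σ^(j:ℕ))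
      ⟨fun j j' h => hinj j j' h, fun h => hsurj h⟩ with hedef
    rw [← Equiv.sum_comp e (fun h : ↥(zpowers g) => h • a)]
    have h3 : ∀ j : Fin n, (e j) • a = (σ^(j:ℕ)) • a := fun j => rfl
    rw [Finset.sum_congr rfl fun j _ => h3 j]
    rw [Fin.sum_univ_eq_sum_range (fun j => (σ^j) • a) n]
    exact hzero
  have haug : a ∈ augSub (↥(zpowers g)) F := normKer_le_of_tate hfl a hnorm
  -- augmentation subgroup is the range of m ↦ σ • m - m
  set D : F →+ F := AddMonoidHom.mk' (fun m => σ • m - m) (by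
    intro x y
    show σ • (x + y) - (x + y) = (σ • x - x) + (σ • y - y)
    rw [smul_add]; abel) with hDdef
  have hrange : augSub (↥(zpowers g)) F ≤ D.range := by
    rw [augSub, AddSubgroup.closure_le]
    rintro _ ⟨h, m, rfl⟩
    obtain ⟨k, hk⟩ := hg.mem_powers_iff_mem_zpowers.2 h.2
    have hhk : h = σ^k := by
      apply Subtype.coe_injective
      show (h : K) = ((σ^k : ↥(zpowers g)) : K)
      rw [coe_pow_subtype]
      exact hk.symm
    refine ⟨∑ j ∈ Finset.range k, (σ^j) • m, ?_⟩
    have h5 : D (∑ j ∈ Finset.range k, (σ^j) • m)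
        = ∑ j ∈ Finset.range k, (σ^j) • (σ • m - m) := by
      rw [map_sum]
      refine Finset.sum_congr rfl fun j _ => ?_
      show σ • ((σ^j) • m) - (σ^j) • m = (σ^j) • (σ • m - m)
      rw [smul_sub, ← mul_smul, ← mul_smul, ← pow_succ', pow_succ]
    rw [h5, telescope_smul, hhk]
  obtain ⟨m₀, hm₀⟩ := hrange haug
  refine mem_B1_iff.2 ⟨m₀, fun h => ?_⟩
  obtain ⟨k, hk⟩ := hg.mem_powers_iff_mem_zpowers.2 h.2
  have hhk : h = σ^k := by
    apply Subtype.coe_injective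
    show (h : K) = ((σ^k : ↥(zpowers g)) : K)
    rw [coe_pow_subtype]
    exact hk.symm
  have hD : σ • m₀ - m₀ = a := hm₀
  rw [hhk, z1_pow_sum g f k]
  calc ∑ j ∈ Finset.range k, (σ^j) • f.1 σ
      = ∑ j ∈ Finset.range k, (σ^j) • (σ • m₀ - m₀) := by
        refine Finset.sum_congr rfl fun j _ => ?_
        rw [hD]
    _ = (σ^k) • m₀ - m₀ := telescope_smul g m₀ k

end CTFlasque


section CTDelta
open Subgroup
variable {K M P F : Type} [Group K] [Finite K]
variable [AddCommGroup M] [AddCommGroup P] [AddCommGroup F]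
variable [DistribMulAction K M] [DistribMulAction K P] [DistribMulAction K F]

theorem mem_Sha2_mk {c : Z2 K M} :
    (QuotientAddGroup.mk c : H2 K M) ∈ Sha2 K M
      ↔ ∀ g : K, resZ2 K M (zpowers g) c ∈ B2 (↥(zpowers g)) M := by
  rw [Sha2, AddSubgroup.mem_iInf]
  refine forall_congr' fun g => ?_
  have h1 : resH2 K M (zpowers g) (QuotientAddGroup.mk c)
      = QuotientAddGroup.mk (resZ2 K M (zpowers g) c) := QuotientAddGroup.map_mk _ _ _ _ c
  rw [AddMonoidHom.mem_ker, h1, QuotientAddGroup.eq_zero_iff]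

theorem sha2triv_of_bot (h : Sha2Triv K M) : ∀ x : Sha2 K M, x = 0 := by
  intro x
  obtain ⟨y, hy⟩ := x
  obtain ⟨c, rfl⟩ := QuotientAddGroup.mk_surjective y
  have h2 := mem_Sha2_mk.1 hy
  have h3 := h c h2
  apply Subtype.ext
  exact (QuotientAddGroup.eq_zero_iff c).2 h3

theorem delta_iso (hP1 : H1Triv K P) (hPS : Sha2Triv K P)
    (hFcyc : ∀ g : K, H1Triv (↥(zpowers g)) F)
    (se : ShortExactG K M P F) :
    Nonempty (H1 K F ≃+ Sha2 K M) := by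
  classical
  obtain ⟨i, p, hi, hp, hinj, hsurj, hker⟩ := se
  have hi' : ∀ (g : K) (m : M), i (g • m) = g • i m := hi
  have hp' : ∀ (g : K) (m : P), p (g • m) = g • p m := hp
  have hpi : ∀ m : M, p (i m) = 0 := by
    intro m
    have h2 : i m ∈ p.ker := hker ▸ AddMonoidHom.mem_range.2 ⟨m, rfl⟩
    exact AddMonoidHom.mem_ker.mp h2
  choose sct hsct using hsurj
  have hex : ∀ (f : Z1 K F) (gh : K × K),
      p (gh.1 • sct (f.1 gh.2) - sct (f.1 (gh.1 * gh.2)) + sct (f.1 gh.1)) = 0 := by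
    intro f gh
    rw [map_add, map_sub, hp', hsct, hsct, hsct, f.2 gh.1 gh.2]
    abel
  choose dz hdz using fun (f : Z1 K F) (gh : K × K) => exists_pre_of_ker hker (hex f gh)
  have hdz' : ∀ (f : Z1 K F) (g h : K),
      i (dz f (g, h)) = g • sct (f.1 h) - sct (f.1 (g*h)) + sct (f.1 g) :=
    fun f g h => hdz f (g, h)
  have hdzZ : ∀ f : Z1 K F, (fun g h => dz f (g, h)) ∈ Z2 K M := by
    intro f g h k
    apply hinj
    simp only [map_sub, map_add, map_zero, hi', hdz']
    simp only [mul_smul, smul_sub, smul_add, mul_assoc]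
    abel
  set deltaZ : Z1 K F → Z2 K M := fun f => ⟨fun g h => dz f (g, h), hdzZ f⟩ with hdelZ
  have hadd : ∀ f f' : Z1 K F,
      (QuotientAddGroup.mk (deltaZ (f + f')) : H2 K M)
        = QuotientAddGroup.mk (deltaZ f) + QuotientAddGroup.mk (deltaZ f') := by
    intro f f'
    have hw0 : ∀ g : K, p (sct ((f + f').1 g) - sct (f.1 g) - sct (f'.1 g)) = 0 := by
      intro g
      rw [map_sub, map_sub, hsct, hsct, hsct]
      show (f.1 g + f'.1 g) - f.1 g - f'.1 g = 0
      abel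
    choose v hv using fun g : K => exists_pre_of_ker hker (hw0 g)
    have hmem : deltaZ (f + f') - deltaZ f - deltaZ f' ∈ B2 K M := by
      refine mem_B2_iff.2 ⟨v, fun g h => ?_⟩
      apply hinj
      show i (dz (f + f') (g,h) - dz f (g,h) - dz f' (g,h)) = i (g • v h - v (g*h) + v g)
      simp only [map_sub, map_add, hi', hv, hdz']
      show (g • sct ((f + f').1 h) - sct ((f + f').1 (g*h)) + sct ((f + f').1 g))
            - (g • sct (f.1 h) - sct (f.1 (g*h)) + sct (f.1 g))
            - (g • sct (f'.1 h) - sct (f'.1 (g*h)) + sct (f'.1 g))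
          = g • (sct ((f + f').1 h) - sct (f.1 h) - sct (f'.1 h))
            - (sct ((f + f').1 (g*h)) - sct (f.1 (g*h)) - sct (f'.1 (g*h)))
            + (sct ((f + f').1 g) - sct (f.1 g) - sct (f'.1 g))
      simp only [smul_sub]
      abel
    have h4 := (QuotientAddGroup.mk' (B2 K M)).map_sub (deltaZ (f + f') - deltaZ f) (deltaZ f')
    have h5 := (QuotientAddGroup.mk' (B2 K M)).map_sub (deltaZ (f + f')) (deltaZ f)
    have h7 : (QuotientAddGroup.mk' (B2 K M)) (deltaZ (f + f') - deltaZ f - deltaZ f') = 0 :=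
      (QuotientAddGroup.eq_zero_iff _).2 hmem
    rw [h4, h5] at h7
    have h8 := sub_eq_zero.mp h7
    exact eq_add_of_sub_eq' h8
  set Φ0 : Z1 K F →+ H2 K M :=
    AddMonoidHom.mk' (fun f => QuotientAddGroup.mk (deltaZ f)) hadd with hΦ0
  have hker0 : ∀ f ∈ B1 K F, Φ0 f = 0 := by
    rintro f ⟨y, rfl⟩
    have hw0 : ∀ g : K, p (sct ((coboundHom K F y).1 g) - (g • sct y - sct y)) = 0 := by
      intro g
      rw [map_sub, map_sub, hp', hsct, hsct]
      show (g • y - y) - (g • y - y) = 0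
      rw [sub_self]
    choose v hv using fun g : K => exists_pre_of_ker hker (hw0 g)
    have hmem : deltaZ (coboundHom K F y) ∈ B2 K M := by
      refine mem_B2_iff.2 ⟨v, fun g h => ?_⟩
      apply hinj
      rw [hdz']
      simp only [map_add, map_sub, hi', hv]
      rw [d_sub_cobound (fun g => sct ((coboundHom K F y).1 g)) (sct y) g h]
    exact (QuotientAddGroup.eq_zero_iff _).2 hmem
  set Φ1 : H1 K F →+ H2 K M := QuotientAddGroup.lift (B1 K F) Φ0 hker0 with hΦ1
  have hΦ1mk : ∀ f : Z1 K F, Φ1 (QuotientAddGroup.mk f) = QuotientAddGroup.mk (deltaZ f) :=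
    fun f => rfl
  have hSha : ∀ x : H1 K F, Φ1 x ∈ Sha2 K M := by
    intro x
    obtain ⟨f, rfl⟩ := QuotientAddGroup.mk_surjective x
    rw [hΦ1mk]
    refine mem_Sha2_mk.2 fun g₀ => ?_
    obtain ⟨y, hy⟩ := mem_B1_iff.1 (hFcyc g₀ (resZ1 K F (zpowers g₀) f))
    have hy' : ∀ a : ↥(zpowers g₀), f.1 ↑a = (a : K) • y - y := hy
    have hw0 : ∀ a : ↥(zpowers g₀),
        p (sct (f.1 ↑a) - ((a : K) • sct y - sct y)) = 0 := by
      intro a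
      rw [map_sub, map_sub, hp', hsct, hsct, hy' a, sub_self]
    choose v hv using fun a : ↥(zpowers g₀) => exists_pre_of_ker hker (hw0 a)
    refine mem_B2_iff.2 ⟨v, fun a b => ?_⟩
    apply hinj
    have hres : (resZ2 K M (zpowers g₀) (deltaZ f)).1 a b = dz f (↑a, ↑b) := rfl
    rw [hres, subgroup_smul_eq, hdz']
    simp only [map_add, map_sub, hi', hv]
    rw [show ((a*b : ↥(zpowers g₀)) : K) = (a : K) * (b : K) from rfl]
    rw [d_sub_cobound (fun g : K => sct (f.1 g)) (sct y) (a : K) (b : K)]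
  set Φ : H1 K F →+ ↥(Sha2 K M) := Φ1.codRestrict (Sha2 K M) hSha with hΦ
  have hinj1 : Injective Φ := by
    rw [injective_iff_map_eq_zero]
    intro x hx
    obtain ⟨f, rfl⟩ := QuotientAddGroup.mk_surjective x
    have h1 : Φ1 (QuotientAddGroup.mk f) = 0 := congrArg Subtype.val hx
    rw [hΦ1mk] at h1
    obtain ⟨v, hv⟩ := mem_B2_iff.1 ((QuotientAddGroup.eq_zero_iff _).1 h1)
    have hv' : ∀ g h : K, dz f (g, h) = g • v h - v (g*h) + v g := hv
    set u' : K → P := fun g => sct (f.1 g) - i (v g) with hu'def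
    have hu'Z : (fun g => u' g) ∈ Z1 K P := by
      intro g h
      have h3 := congrArg i (hv' g h)
      rw [hdz'] at h3
      rw [map_add, map_sub, hi'] at h3
      have h2 : g • u' h - u' (g*h) + u' g = 0 := by
        show g • (sct (f.1 h) - i (v h)) - (sct (f.1 (g*h)) - i (v (g*h)))
            + (sct (f.1 g) - i (v g)) = 0
        rw [smul_sub]
        rw [← sub_eq_zero] at h3
        rw [← h3]
        abel
      exact eq_of_dexpr h2
    obtain ⟨mP, hmP⟩ := mem_B1_iff.1 (hP1 ⟨fun g => u' g, hu'Z⟩)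
    have hmP' : ∀ g : K, u' g = g • mP - mP := hmP
    refine (QuotientAddGroup.eq_zero_iff f).2 (mem_B1_iff.2 ⟨p mP, fun g => ?_⟩)
    have h5 : p (u' g) = f.1 g := by
      show p (sct (f.1 g) - i (v g)) = f.1 g
      rw [map_sub, hsct, hpi, sub_zero]
    rw [← h5, hmP' g, map_sub, hp']
  have hsurj1 : Surjective Φ := by
    rintro ⟨y, hy⟩
    obtain ⟨c, rfl⟩ := QuotientAddGroup.mk_surjective y
    have hcyc := mem_Sha2_mk.1 hy
    obtain ⟨U, hU⟩ := mem_B2_iff.1 (hPS _ (cycres_push i hi hcyc))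
    have hU' : ∀ g h : K, i (c.1 g h) = g • U h - U (g*h) + U g := hU
    have hfZ : (fun g => p (U g)) ∈ Z1 K F := by
      intro g h
      have h1 := congrArg p (hU' g h)
      rw [hpi, map_add, map_sub, hp'] at h1
      exact eq_of_dexpr h1.symm
    set fZ : Z1 K F := ⟨fun g => p (U g), hfZ⟩ with hfZdef
    refine ⟨QuotientAddGroup.mk fZ, ?_⟩
    apply Subtype.ext
    show Φ1 (QuotientAddGroup.mk fZ) = QuotientAddGroup.mk c
    rw [hΦ1mk]
    have hw0 : ∀ g : K, p (sct (fZ.1 g) - U g) = 0 := by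
      intro g
      rw [map_sub, hsct]
      show p (U g) - p (U g) = 0
      rw [sub_self]
    choose v hv using fun g : K => exists_pre_of_ker hker (hw0 g)
    have hmem : deltaZ fZ - c ∈ B2 K M := by
      refine mem_B2_iff.2 ⟨v, fun g h => ?_⟩
      apply hinj
      show i (dz fZ (g,h) - c.1 g h) = i (g • v h - v (g*h) + v g)
      simp only [map_sub, map_add, hi', hv, hdz']
      rw [hU' g h, smul_sub]
      abel
    have h4 := (QuotientAddGroup.mk' (B2 K M)).map_sub (deltaZ fZ) c
    have h7 : (QuotientAddGroup.mk' (B2 K M)) (deltaZ fZ - c) = 0 :=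
      (QuotientAddGroup.eq_zero_iff _).2 hmem
    rw [h4] at h7
    exact sub_eq_zero.mp h7
  exact ⟨AddEquiv.ofBijective Φ ⟨hinj1, hsurj1⟩⟩

end CTDelta

theorem stmt_15 (G : Type) [Group G] [Finite G]
    (M P F : Type) [AddCommGroup M] [AddCommGroup P] [AddCommGroup F]
    [DistribMulAction G M] [DistribMulAction G P] [DistribMulAction G F]
    (hM : IsLat M) (hPperm : IsPermLat G P) (hF : IsLat F)
    (hFfl : IsFlasque G F) (se : ShortExactG G M P F) :
    Nonempty (H1 G F ≃+ Sha2 G M) ∧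
    (IsEquivSummandQP G M → ∀ (H : Subgroup G) (x : Sha2 H M), x = 0) := by
  classical
  refine ⟨?_, ?_⟩
  · obtain ⟨hP1, hPS⟩ := permLat_H1_Sha hPperm
    exact delta_iso hP1 hPS (fun g => flasque_cyclic_H1 g (hFfl (Subgroup.zpowers g))) se
  · intro hEq H x
    obtain ⟨S, iS1, iS2, D, iD1, iD2, D', iD'1, iD'2, hSlat, hSqp, ⟨e, he⟩, hMD⟩ := hEq
    obtain ⟨P₂, iP21, iP22, Q₂, iQ21, iQ22, hP₂, hQ₂, seS⟩ := hSqp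
    obtain ⟨E, iE1, iE2, P₁, iP11, iP12, Q₁, iQ11, iQ12, hElat, hP₁, hQ₁, seME, seDE⟩ := hMD
    obtain ⟨hP₂1, hP₂S⟩ := permLat_H1_Sha (isPermLat_subgroup H hP₂)
    obtain ⟨hQ₂1, hQ₂S⟩ := permLat_H1_Sha (isPermLat_subgroup H hQ₂)
    obtain ⟨hP₁1, hP₁S⟩ := permLat_H1_Sha (isPermLat_subgroup H hP₁)
    obtain ⟨hQ₁1, hQ₁S⟩ := permLat_H1_Sha (isPermLat_subgroup H hQ₁)
    have hQ₁c : ∀ H' : Subgroup (↥H), H1Triv (↥H') Q₁ := fun H' =>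
      (permLat_H1_Sha (isPermLat_subgroup H' (isPermLat_subgroup H hQ₁))).1
    -- S is Sha-trivial over ↥H
    obtain ⟨jS, pS, hjS, hpS, hinjS, hsurjS, hkerS⟩ := shortExactG_subgroup H seS
    have hSsha : Sha2Triv (↥H) S :=
      Sha2Triv_of_sub jS pS hjS hpS hinjS hsurjS hkerS hP₂S hQ₂1
    -- D is a retract of S
    have heH : IsEquivMapP (↥H) (⇑e) := isEquivMapP_subgroup H he
    have heH' : ∀ (k : ↥H) (x : D × D'), e (k • x) = k • e x := heH
    set jD : D →+ S := e.toAddMonoidHom.comp (AddMonoidHom.inl D D') with hjDdef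
    set rD : S →+ D := (AddMonoidHom.fst D D').comp e.symm.toAddMonoidHom with hrDdef
    have heHsymm : ∀ (k : ↥H) (s : S), e.symm (k • s) = k • e.symm s := by
      intro k s
      apply e.injective
      rw [e.apply_symm_apply, heH' k (e.symm s), e.apply_symm_apply]
    have hjDe : IsEquivMapP (↥H) ⇑jD := by
      intro k x
      show e (k • x, 0) = k • e (x, 0)
      have h1 : ((k • x, (0 : D')) : D × D') = k • (x, 0) := by
        refine Prod.ext rfl ?_
        show (0 : D') = k • 0
        rw [smul_zero]
      rw [h1, heH']
    have hrDe : IsEquivMapP (↥H) ⇑rD := by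
      intro k s
      show (e.symm (k • s)).1 = k • (e.symm s).1
      rw [heHsymm]
      rfl
    have hri : ∀ x : D, rD (jD x) = x := by
      intro x
      show (e.symm (e (x, 0))).1 = x
      rw [e.symm_apply_apply]
    have hDsha : Sha2Triv (↥H) D := Sha2Triv_of_retract jD rD hjDe hrDe hri hSsha
    -- E is Sha-trivial (extension of Q₁ by D)
    obtain ⟨jE, pE, hjE, hpE, hinjE, hsurjE, hkerE⟩ := shortExactG_subgroup H seDE
    have hEsha : Sha2Triv (↥H) E :=
      Sha2Triv_of_ext jE pE hjE hpE hinjE hsurjE hkerE hDsha hQ₁S hQ₁c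
    -- M is Sha-trivial (sub of E with permutation quotient P₁)
    obtain ⟨jM, pM, hjM, hpM, hinjM, hsurjM, hkerM⟩ := shortExactG_subgroup H seME
    have hMsha : Sha2Triv (↥H) M :=
      Sha2Triv_of_sub jM pM hjM hpM hinjM hsurjM hkerM hEsha hP₁1
    exact sha2triv_of_bot hMsha x
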